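/- For the 2D bicrossproduct model, the contorsion tensor S^κ_{αβ} = 2b ε_{αμ} x^μ ε_{βν} g^{κν} (with x^0 = t, x^1 = r, ε_{01} = 1 = −ε_{10}) has contraction S^μ = S^μ_{αβ} g^{αβ} = 2x^μ/r², and its covariant derivatives with respect to the quantising connection ∇ (with nonzero Christoffel symbols Γ^0_{01} = −1/r, Γ^0_{10} = 1/r) satisfy S^μ_{;0} = 0 and S^μ_{;1} = −2x^μ/r³. -/

import Mathlib

/-- Partial derivative of `f : (Fin n → ℝ) → ℝ` in the `i`-th coordinate direction. -/
noncomputable def pd {n : ℕ} (i : Fin n) (f : (Fin n → ℝ) → ℝ) (x : Fin n → ℝ) : ℝ :=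
  fderiv ℝ f x (Pi.single i 1)

/-- The antisymmetric symbol on `Fin 2` with `eps2 0 1 = 1`. -/
noncomputable def eps2 (α β : Fin 2) : ℝ :=
  if α = 0 ∧ β = 1 then 1 else if α = 1 ∧ β = 0 then -1 else 0

/-- The inverse bicrossproduct metric (coordinates `x = (t, r)`):
`g^{00} = (1+bt²)/(br²)`, `g^{01} = g^{10} = t/r`, `g^{11} = 1`. -/
noncomputable def ginvBic (b : ℝ) (μ ν : Fin 2) (x : Fin 2 → ℝ) : ℝ :=
  if μ = 0 ∧ ν = 0 then (1 + b * (x 0)^2) / (b * (x 1)^2)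
  else if (μ = 0 ∧ ν = 1) ∨ (μ = 1 ∧ ν = 0) then x 0 / x 1
  else 1

/-- The contorsion tensor `S^κ_{αβ} = 2b ε_{αμ} x^μ ε_{βν} g^{κν}` of the 2D
bicrossproduct model. -/
noncomputable def SBic (b : ℝ) (κ α β : Fin 2) (x : Fin 2 → ℝ) : ℝ :=
  2 * b * (∑ μ, eps2 α μ * x μ) * (∑ ν, eps2 β ν * ginvBic b κ ν x)

/-- The contorsion vector `S^μ = S^μ_{αβ} g^{αβ}`. -/
noncomputable def SvecBic (b : ℝ) (μ : Fin 2) (x : Fin 2 → ℝ) : ℝ :=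
  ∑ α, ∑ β, SBic b μ α β x * ginvBic b α β x

/-- Christoffel symbols of the quantising connection: `Γ^0_{01} = −1/r`, `Γ^0_{10} = 1/r`,
all others zero. -/
noncomputable def ΓqBic (α β γ : Fin 2) (x : Fin 2 → ℝ) : ℝ :=
  if α = 0 ∧ β = 0 ∧ γ = 1 then -(1 / x 1)
  else if α = 0 ∧ β = 1 ∧ γ = 0 then 1 / x 1
  else 0

lemma Svec_eq (b : ℝ) (hb : b ≠ 0) (μ : Fin 2) (x : Fin 2 → ℝ) (hx : x 1 ≠ 0) :
    SvecBic b μ x = 2 * x μ / (x 1)^2 := by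
  fin_cases μ <;>
  · simp [SvecBic, SBic, ginvBic, eps2, Fin.sum_univ_two]
    field_simp
    ring

lemma pd_f (μ i : Fin 2) (x : Fin 2 → ℝ) (hx : x 1 ≠ 0) :
    pd i (fun y : Fin 2 → ℝ => 2 * y μ / (y 1)^2) x =
      2 * (Pi.single i (1:ℝ) : Fin 2 → ℝ) μ / (x 1)^2
      - 2 * x μ * (2 * x 1 * (Pi.single i (1:ℝ) : Fin 2 → ℝ) 1) / ((x 1)^2)^2 := by
  have h1 : HasFDerivAt (fun y : Fin 2 → ℝ => y μ)
      (ContinuousLinearMap.proj μ : (Fin 2 → ℝ) →L[ℝ] ℝ) x := by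
    exact hasFDerivAt_apply (𝕜 := ℝ) μ x
  have h2 : HasFDerivAt (fun y : Fin 2 → ℝ => y 1)
      (ContinuousLinearMap.proj 1 : (Fin 2 → ℝ) →L[ℝ] ℝ) x := by
    exact hasFDerivAt_apply (𝕜 := ℝ) 1 x
  have hpow := h2.mul h2
  have hinv := (hasFDerivAt_inv (mul_ne_zero hx hx)).comp x hpow
  have hd := (h1.const_mul 2).mul hinv
  have heq : (fun y : Fin 2 → ℝ => 2 * y μ / (y 1)^2)
      = fun y : Fin 2 → ℝ => (2 * y μ) * ((y 1 * y 1)⁻¹) := by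
    funext y; rw [div_eq_mul_inv, sq]
  simp only [Function.comp_def, Pi.mul_def] at hd
  rw [pd, heq, hd.fderiv]
  simp
  field_simp
  ring

/-- In the 2D bicrossproduct model the contorsion vector is `S^μ = 2x^μ/r²` and its
covariant derivatives `S^μ_{;γ} = ∂_γ S^μ + Γ^μ_{γν} S^ν` with respect to the quantising
connection satisfy `S^μ_{;0} = 0` and `S^μ_{;1} = −2x^μ/r³`. -/
theorem stmt18 (b : ℝ) (hb : b ≠ 0) :
    ∀ x : Fin 2 → ℝ, 0 < x 1 → ∀ μ : Fin 2,
      (SvecBic b μ x = 2 * x μ / (x 1)^2) ∧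
      (pd 0 (SvecBic b μ) x + (∑ ν, ΓqBic μ 0 ν x * SvecBic b ν x) = 0) ∧
      (pd 1 (SvecBic b μ) x + (∑ ν, ΓqBic μ 1 ν x * SvecBic b ν x)
        = -(2 * x μ) / (x 1)^3) := by
  intro x hx μ
  have hxne : x 1 ≠ 0 := ne_of_gt hx
  have hopen : IsOpen {y : Fin 2 → ℝ | 0 < y 1} :=
    isOpen_lt continuous_const (continuous_apply 1)
  have hpd : ∀ ν i, pd i (SvecBic b ν) x = pd i (fun y : Fin 2 → ℝ => 2 * y ν / (y 1)^2) x := by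
    intro ν i
    have hev : SvecBic b ν =ᶠ[nhds x] (fun y : Fin 2 → ℝ => 2 * y ν / (y 1)^2) :=
      Filter.eventuallyEq_of_mem (hopen.mem_nhds hx)
        (fun y hy => Svec_eq b hb ν y (ne_of_gt hy))
    rw [pd, pd, hev.fderiv_eq]
  refine ⟨Svec_eq b hb μ x hxne, ?_, ?_⟩ <;>
  · rw [hpd, pd_f _ _ _ hxne]
    simp only [Fin.sum_univ_two, Svec_eq b hb _ x hxne]
    fin_cases μ <;>
      simp [ΓqBic, Pi.single_eq_same, Pi.single_eq_of_ne] <;>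
      field_simp <;> ring
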